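/- (Squared norm of the k-Mersenne octonion) For every natural number n, (9k²−8)·∑_{r=0}^{7} M_{k,n+r}² = λ₁^{2n}·∑_{r=0}^{7} λ₁^{2r} + λ₂^{2n}·∑_{r=0}^{7} λ₂^{2r} − 255·2^{n+1}, where λ₁, λ₂ are the roots of λ² − 3kλ + 2 = 0. -/

import Mathlib

noncomputable def M (k : ℝ) : ℕ → ℝ
  | 0 => 0
  | 1 => 1
  | (n+2) => 3*k * M k (n+1) - 2 * M k n

lemma binet (k : ℝ) (lam1 lam2 : ℝ)
    (hsum : lam1 + lam2 = 3*k) (hdiff : lam1 - lam2 = Real.sqrt (9*k^2 - 8))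
    (hprod : lam1 * lam2 = 2) :
    ∀ n, Real.sqrt (9*k^2 - 8) * M k n = lam1^n - lam2^n
  | 0 => by simp [M]
  | 1 => by simpa [M] using hdiff.symm
  | (n+2) => by
    have ih1 := binet k lam1 lam2 hsum hdiff hprod (n+1)
    have ih0 := binet k lam1 lam2 hsum hdiff hprod n
    have hq1 : lam1^2 = 3*k*lam1 - 2 := by linear_combination lam1*hsum - hprod
    have hq2 : lam2^2 = 3*k*lam2 - 2 := by linear_combination lam2*hsum - hprod
    show Real.sqrt (9*k^2 - 8) * (3*k * M k (n+1) - 2 * M k n) = _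
    linear_combination (3*k)*ih1 - 2*ih0 - lam1^n * hq1 + lam2^n * hq2

theorem kMersenne_oct_norm (k : ℝ) (hk : 9*k^2 > 8)
    (lam1 lam2 : ℝ)
    (h1 : lam1 = (3*k + Real.sqrt (9*k^2 - 8))/2)
    (h2 : lam2 = (3*k - Real.sqrt (9*k^2 - 8))/2)
    (n : ℕ) :
    (9*k^2 - 8) * ∑ r ∈ Finset.range 8, (M k (n+r))^2
      = lam1^(2*n) * ∑ r ∈ Finset.range 8, lam1^(2*r)
        + lam2^(2*n) * ∑ r ∈ Finset.range 8, lam2^(2*r)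
        - 255 * 2^(n+1) := by
  have hnn : (0:ℝ) ≤ 9*k^2 - 8 := by linarith
  have hs : Real.sqrt (9*k^2 - 8) ^ 2 = 9*k^2 - 8 := Real.sq_sqrt hnn
  have hsum : lam1 + lam2 = 3*k := by rw [h1, h2]; ring
  have hdiff : lam1 - lam2 = Real.sqrt (9*k^2 - 8) := by rw [h1, h2]; ring
  have hprod : lam1 * lam2 = 2 := by rw [h1, h2]; nlinarith [hs]
  have term : ∀ m, (9*k^2 - 8) * (M k m)^2
      = lam1^(2*m) + lam2^(2*m) - 2*2^m := by
    intro m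
    have hb := binet k lam1 lam2 hsum hdiff hprod m
    have h2m : (2:ℝ)^m = lam1^m * lam2^m := by
      rw [← mul_pow, hprod]
    calc (9*k^2 - 8) * (M k m)^2 = (Real.sqrt (9*k^2 - 8) * M k m)^2 := by
          rw [mul_pow, hs]
      _ = (lam1^m - lam2^m)^2 := by rw [hb]
      _ = lam1^(2*m) + lam2^(2*m) - 2*2^m := by
          rw [h2m, two_mul, pow_add, pow_add]; ring
  simp only [Finset.sum_range_succ, Finset.sum_range_zero]
  have t0 := term n
  have t1 := term (n+1)
  have t2 := term (n+2)
  have t3 := term (n+3)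
  have t4 := term (n+4)
  have t5 := term (n+5)
  have t6 := term (n+6)
  have t7 := term (n+7)
  simp only [Nat.add_zero] at *
  linear_combination t0 + t1 + t2 + t3 + t4 + t5 + t6 + t7
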